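/- Let K be a compact convex set with closed extreme boundary ∂ₑK, embedded in C(∂ₑK) via restriction. If every positive linear functional in the unit sphere of A(K)* has a unique positive norm-preserving extension to C(∂ₑK), then K is a Choquet simplex: every point of K is the resultant (barycenter) of a unique maximal probability measure on K. -/

import Mathlib

open NormedSpace ContinuousMap

/-- A continuous function on `K` is affine if it preserves convex combinations. -/
def IsAffineOn {E : Type*} [AddCommGroup E] [Module ℝ E] [TopologicalSpace E]
    (K : Set E) (a : C(K, ℝ)) : Prop :=
  ∀ (x y : K) (t : ℝ), 0 ≤ t → t ≤ 1 →
    ∀ h : t • (x : E) + (1 - t) • (y : E) ∈ K,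
      a ⟨t • (x : E) + (1 - t) • (y : E), h⟩ = t * a x + (1 - t) * a y

/-- `A(K)`, the affine continuous real functions on `K`, as a subspace of `C(K, ℝ)`. -/
def affineFns {E : Type*} [AddCommGroup E] [Module ℝ E] [TopologicalSpace E]
    (K : Set E) : Submodule ℝ C(K, ℝ) where
  carrier := {a | IsAffineOn K a}
  add_mem' := by
    intro a b ha hb x y t ht ht' h
    simp only [ContinuousMap.add_apply, ha x y t ht ht' h, hb x y t ht ht' h]; ring
  zero_mem' := by intro x y t ht ht' h; simp
  smul_mem' := by
    intro c a ha x y t ht ht' h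
    simp only [ContinuousMap.smul_apply, ha x y t ht ht' h, smul_eq_mul]; ring

theorem one_mem_affineFns {E : Type*} [AddCommGroup E] [Module ℝ E] [TopologicalSpace E]
    (K : Set E) : (1 : C(K, ℝ)) ∈ affineFns K := by
  intro x y t ht ht' h
  simp only [ContinuousMap.one_apply]; ring


namespace NormedSpace

/-- The topological dual of a seminormed space `E` (the former Mathlib `NormedSpace.Dual`). -/
def Dual (𝕜 : Type*) [RCLike 𝕜] (E : Type*) [SeminormedAddCommGroup E] [NormedSpace 𝕜 E] :
    Type _ :=
  E →L[𝕜] 𝕜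

noncomputable instance (𝕜 : Type*) [RCLike 𝕜] (E : Type*) [SeminormedAddCommGroup E] [NormedSpace 𝕜 E] :
    SeminormedAddCommGroup (Dual 𝕜 E) :=
  inferInstanceAs (SeminormedAddCommGroup (E →L[𝕜] 𝕜))

noncomputable instance (𝕜 : Type*) [RCLike 𝕜] (E : Type*) [SeminormedAddCommGroup E] [NormedSpace 𝕜 E] :
    NormedSpace 𝕜 (Dual 𝕜 E) :=
  inferInstanceAs (NormedSpace 𝕜 (E →L[𝕜] 𝕜))

instance (𝕜 : Type*) [RCLike 𝕜] (E : Type*) [SeminormedAddCommGroup E] [NormedSpace 𝕜 E] :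
    FunLike (Dual 𝕜 E) E 𝕜 :=
  inferInstanceAs (FunLike (E →L[𝕜] 𝕜) E 𝕜)

end NormedSpace

instance instDualCLMClass (𝕜 : Type*) [RCLike 𝕜] (E : Type*) [SeminormedAddCommGroup E]
    [NormedSpace 𝕜 E] : ContinuousSemilinearMapClass (Dual 𝕜 E) (RingHom.id 𝕜) E 𝕜 :=
  inferInstanceAs (ContinuousSemilinearMapClass (E →L[𝕜] 𝕜) (RingHom.id 𝕜) E 𝕜)

/-- Restriction of a continuous function on `K` to the set of extreme points of `K`. -/
def restrictExt {E : Type*} [AddCommGroup E] [Module ℝ E] [TopologicalSpace E]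
    (K : Set E) (a : C(K, ℝ)) : C(Set.extremePoints ℝ K, ℝ) :=
  a.comp ⟨Set.inclusion extremePoints_subset,
    continuous_inclusion extremePoints_subset⟩


section Aux
variable {E : Type*} [AddCommGroup E] [Module ℝ E] [TopologicalSpace E]
    (K : Set E) [CompactSpace K] [CompactSpace (Set.extremePoints ℝ K)]

/-- `restrictExt` as a continuous linear map. -/
noncomputable def restrictExtL : C(K, ℝ) →L[ℝ] C(Set.extremePoints ℝ K, ℝ) :=
  LinearMap.mkContinuous
    { toFun := fun f : C(K, ℝ) => restrictExt K f
      map_add' := by intros; ext p; simp [restrictExt]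
      map_smul' := by intros; ext p; simp [restrictExt] } 1
    (by
      intro f
      rw [one_mul]
      refine (ContinuousMap.norm_le _ (norm_nonneg f)).2 fun p => ?_
      exact ContinuousMap.norm_coe_le_norm f _)

theorem restrictExtL_apply (f : C(K, ℝ)) (p : Set.extremePoints ℝ K) :
    restrictExtL K f p = f ⟨p.1, extremePoints_subset p.2⟩ := rfl

theorem restrictExtL_eq (f : C(K, ℝ)) : restrictExtL K f = restrictExt K f := rfl

theorem exists_restrictExtL_eq [T2Space E] (hextcl : IsClosed (Set.extremePoints ℝ K))
    (g : C(Set.extremePoints ℝ K, ℝ)) : ∃ f : C(K, ℝ), restrictExtL K f = g := by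
  set s : Set K := Subtype.val ⁻¹' (Set.extremePoints ℝ K) with hs
  have hscl : IsClosed s := hextcl.preimage continuous_subtype_val
  have hcont : Continuous fun b : s => (⟨(b : K), b.2⟩ : Set.extremePoints ℝ K) :=
    Continuous.subtype_mk (continuous_subtype_val.comp continuous_subtype_val) _
  obtain ⟨f, hf⟩ := (g.comp ⟨_, hcont⟩).exists_restrict_eq hscl
  refine ⟨f, ?_⟩
  ext p
  have hp : (⟨p.1, extremePoints_subset p.2⟩ : K) ∈ s := p.2
  have := ContinuousMap.congr_fun hf ⟨⟨p.1, extremePoints_subset p.2⟩, hp⟩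
  simpa [ContinuousMap.restrict, restrictExtL_apply] using this
end Aux

set_option maxHeartbeats 2000000 in
/-- If every positive functional in the unit sphere of `A(K)*` has a unique positive
norm-preserving extension to `C(∂ₑK)*` (via the restriction embedding), then `K` is a
Choquet simplex: every point of `K` is represented by a unique maximal (i.e. supported on
the closed extreme boundary) probability measure, viewed as a positive state on `C(K)`. -/
theorem stmt_13 {E : Type*} [AddCommGroup E] [Module ℝ E] [TopologicalSpace E]
    [IsTopologicalAddGroup E] [ContinuousSMul ℝ E] [T2Space E] [LocallyConvexSpace ℝ E]
    (K : Set E) [CompactSpace K] (hK : Convex ℝ K)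
    [CompactSpace (Set.extremePoints ℝ K)]
    (hextcl : IsClosed (Set.extremePoints ℝ K))
    (hext : ∀ Λ : Dual ℝ (affineFns K), ‖Λ‖ = 1 →
      (∀ a : affineFns K, 0 ≤ (a : C(K, ℝ)) → 0 ≤ Λ a) →
      ∃! μ : Dual ℝ C(Set.extremePoints ℝ K, ℝ),
        (∀ a : affineFns K, μ (restrictExt K (a : C(K, ℝ))) = Λ a) ∧
        ‖μ‖ = 1 ∧
        (∀ g : C(Set.extremePoints ℝ K, ℝ), 0 ≤ g → 0 ≤ μ g)) :
    ∀ x : K, ∃! μ : Dual ℝ C(K, ℝ),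
      ‖μ‖ = 1 ∧ μ 1 = 1 ∧
      (∀ f : C(K, ℝ), 0 ≤ f → 0 ≤ μ f) ∧
      -- `μ` is maximal: it is supported on the (closed) extreme boundary of `K`
      (∀ f : C(K, ℝ), (∀ b : K, (b : E) ∈ Set.extremePoints ℝ K → f b = 0) → μ f = 0) ∧
      -- `x` is the resultant of `μ`
      (∀ a : affineFns K, μ (a : C(K, ℝ)) = (a : C(K, ℝ)) x) := by
  intro x
  haveI hKne : Nonempty K := ⟨x⟩
  have hExtNe : (Set.extremePoints ℝ K).Nonempty := by
    have hKcomp : IsCompact K := isCompact_iff_compactSpace.2 ‹_›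
    exact hKcomp.extremePoints_nonempty ⟨x.1, x.2⟩
  haveI : Nonempty (Set.extremePoints ℝ K) := ⟨⟨hExtNe.choose, hExtNe.choose_spec⟩⟩
  -- The evaluation functional at `x` on `A(K)`.
  set Λ : Dual ℝ (affineFns K) :=
    (ContinuousMap.evalCLM ℝ x).comp (affineFns K).subtypeL with hΛdef
  have hΛapp : ∀ a : affineFns K, Λ a = (a : C(K, ℝ)) x := fun a => rfl
  set one₁ : affineFns K := ⟨1, one_mem_affineFns K⟩ with hone₁
  have hone_norm : ‖one₁‖ = 1 := by
    show ‖(1 : C(K, ℝ))‖ = 1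
    exact norm_one
  have hΛnorm : ‖Λ‖ = 1 := by
    refine le_antisymm (ContinuousLinearMap.opNorm_le_bound _ zero_le_one fun a => ?_) ?_
    · rw [one_mul]
      show ‖(a : C(K, ℝ)) x‖ ≤ ‖a‖
      exact ContinuousMap.norm_coe_le_norm (a : C(K, ℝ)) x
    · have h1 : Λ one₁ = 1 := by rw [hΛapp]; rfl
      calc (1 : ℝ) = ‖Λ one₁‖ := by rw [h1]; simp
        _ ≤ ‖Λ‖ * ‖one₁‖ := Λ.le_opNorm one₁
        _ = ‖Λ‖ := by rw [hone_norm, mul_one]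
  have hΛpos : ∀ a : affineFns K, 0 ≤ (a : C(K, ℝ)) → 0 ≤ Λ a := by
    intro a ha
    rw [hΛapp]
    simpa using ContinuousMap.le_def.1 ha x
  obtain ⟨μ, ⟨hμΛ, hμnorm, hμpos⟩, huniq⟩ := hext Λ hΛnorm hΛpos
  set R : C(K, ℝ) →L[ℝ] C(Set.extremePoints ℝ K, ℝ) := restrictExtL K with hRdef
  have hRnorm : ∀ f : C(K, ℝ), ‖R f‖ ≤ ‖f‖ := fun f =>
    (ContinuousMap.norm_le _ (norm_nonneg f)).2 fun p => ContinuousMap.norm_coe_le_norm f _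
  have hR1 : R (1 : C(K, ℝ)) = 1 := by ext p; rfl
  set ν : Dual ℝ C(K, ℝ) := μ.comp R with hνdef
  have hνapp : ∀ f : C(K, ℝ), ν f = μ (R f) := fun f => rfl
  have hν1 : ν 1 = 1 := by
    rw [hνapp, hR1, show (1 : C(Set.extremePoints ℝ K, ℝ))
      = restrictExt K ((one₁ : affineFns K) : C(K, ℝ)) from rfl, hμΛ one₁, hΛapp]
    rfl
  have hνnorm : ‖ν‖ = 1 := by
    refine le_antisymm (ContinuousLinearMap.opNorm_le_bound _ zero_le_one fun f => ?_) ?_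
    · rw [one_mul]
      show ‖μ (R f)‖ ≤ ‖f‖
      calc ‖μ (R f)‖ ≤ ‖μ‖ * ‖R f‖ := μ.le_opNorm _
        _ = ‖R f‖ := by rw [hμnorm, one_mul]
        _ ≤ ‖f‖ := hRnorm f
    · calc (1 : ℝ) = ‖ν 1‖ := by rw [hν1]; simp
        _ ≤ ‖ν‖ * ‖(1 : C(K, ℝ))‖ := ν.le_opNorm 1
        _ = ‖ν‖ := by rw [norm_one, mul_one]
  have hνpos : ∀ f : C(K, ℝ), 0 ≤ f → 0 ≤ ν f := by
    intro f hf
    refine hμpos _ (ContinuousMap.le_def.2 fun p => ?_)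
    exact ContinuousMap.le_def.1 hf _
  have hνsupp : ∀ f : C(K, ℝ),
      (∀ b : K, (b : E) ∈ Set.extremePoints ℝ K → f b = 0) → ν f = 0 := by
    intro f hf
    have : R f = 0 := by
      ext p
      rw [restrictExtL_apply]
      simpa using hf ⟨p.1, extremePoints_subset p.2⟩ p.2
    rw [hνapp, this, map_zero]
  have hνres : ∀ a : affineFns K, ν (a : C(K, ℝ)) = (a : C(K, ℝ)) x := by
    intro a
    rw [hνapp, restrictExtL_eq, hμΛ a, hΛapp]
  refine ⟨ν, ⟨hνnorm, hν1, hνpos, hνsupp, hνres⟩, ?_⟩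
  rintro ν' ⟨hn', h1', hpos', hsupp', hres'⟩
  -- key: ν' only depends on the restriction to the extreme boundary
  have key : ∀ f f' : C(K, ℝ), R f = R f' → ν' f = ν' f' := by
    intro f f' h
    have hz : ν' (f - f') = 0 := by
      refine hsupp' _ fun b hb => ?_
      have h2 := DFunLike.congr_fun h (⟨b.1, hb⟩ : Set.extremePoints ℝ K)
      rw [restrictExtL_apply, restrictExtL_apply] at h2
      have hb' : (⟨(⟨b.1, hb⟩ : Set.extremePoints ℝ K).1,
          extremePoints_subset (⟨b.1, hb⟩ : Set.extremePoints ℝ K).2⟩ : K) = b :=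
        Subtype.ext rfl
      rw [hb'] at h2
      simp only [ContinuousMap.sub_apply]
      linarith
    have := map_sub ν' f f'
    rw [hz] at this
    linarith [this]
  have hch : ∀ g : C(Set.extremePoints ℝ K, ℝ),
      R (exists_restrictExtL_eq K hextcl g).choose = g := fun g =>
    (exists_restrictExtL_eq K hextcl g).choose_spec
  set μ'lin : C(Set.extremePoints ℝ K, ℝ) →ₗ[ℝ] ℝ :=
    { toFun := fun g => ν' (exists_restrictExtL_eq K hextcl g).choose
      map_add' := by
        intro g h
        show ν' (exists_restrictExtL_eq K hextcl (g + h)).choose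
            = ν' (exists_restrictExtL_eq K hextcl g).choose
              + ν' (exists_restrictExtL_eq K hextcl h).choose
        have : R (exists_restrictExtL_eq K hextcl (g + h)).choose
            = R ((exists_restrictExtL_eq K hextcl g).choose
              + (exists_restrictExtL_eq K hextcl h).choose) := by
          rw [map_add, hch, hch, hch]
        rw [key _ _ this, map_add]
      map_smul' := by
        intro c g
        show ν' (exists_restrictExtL_eq K hextcl (c • g)).choose
            = c • ν' (exists_restrictExtL_eq K hextcl g).choose
        have : R (exists_restrictExtL_eq K hextcl (c • g)).choose
            = R (c • (exists_restrictExtL_eq K hextcl g).choose) := by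
          rw [map_smul, hch, hch]
        rw [key _ _ this, map_smul] } with hμ'lin
  have keyμ' : ∀ (g : C(Set.extremePoints ℝ K, ℝ)) (f : C(K, ℝ)),
      R f = g → μ'lin g = ν' f := by
    intro g f hf
    exact key _ _ (by rw [hch, hf])
  have hbound : ∀ g : C(Set.extremePoints ℝ K, ℝ), ‖μ'lin g‖ ≤ 1 * ‖g‖ := by
    intro g
    set c := ‖g‖ with hc
    have hc0 : 0 ≤ c := norm_nonneg g
    set clampCM : C(ℝ, ℝ) :=
      ⟨fun t => max (min t c) (-c), ((continuous_id.min continuous_const).max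
        continuous_const)⟩ with hclamp
    set f : C(K, ℝ) := clampCM.comp (exists_restrictExtL_eq K hextcl g).choose with hfdef
    have hRf : R f = g := by
      ext p
      rw [restrictExtL_apply]
      show max (min ((exists_restrictExtL_eq K hextcl g).choose
        ⟨p.1, extremePoints_subset p.2⟩) c) (-c) = g p
      have h2 : (exists_restrictExtL_eq K hextcl g).choose
          ⟨p.1, extremePoints_subset p.2⟩ = g p := by
        have := DFunLike.congr_fun (hch g) p
        rwa [restrictExtL_apply] at this
      have habs := abs_le.1 (by simpa [Real.norm_eq_abs] using g.norm_coe_le_norm p)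
      rw [h2, min_eq_left habs.2, max_eq_left habs.1]
    rw [keyμ' g f hRf, one_mul]
    calc ‖ν' f‖ ≤ ‖ν'‖ * ‖f‖ := ν'.le_opNorm f
      _ = ‖f‖ := by rw [hn', one_mul]
      _ ≤ ‖g‖ := by
        refine (ContinuousMap.norm_le _ hc0).2 fun b => ?_
        show ‖max (min _ c) (-c)‖ ≤ c
        rw [Real.norm_eq_abs, abs_le]
        exact ⟨neg_le_neg_iff.2 le_rfl |>.trans (le_max_right _ _) |>.trans le_rfl,
          max_le (min_le_right _ _) (neg_nonpos.2 hc0 |>.trans hc0)⟩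
  set μ' : Dual ℝ C(Set.extremePoints ℝ K, ℝ) :=
    LinearMap.mkContinuous μ'lin 1 hbound with hμ'def
  have hμ'app : ∀ g, μ' g = μ'lin g := fun g => rfl
  have hμ'1 : μ' (1 : C(Set.extremePoints ℝ K, ℝ)) = 1 := by
    rw [hμ'app, keyμ' 1 (1 : C(K, ℝ)) hR1, h1']
  have hμ'Λ : ∀ a : affineFns K, μ' (restrictExt K (a : C(K, ℝ))) = Λ a := by
    intro a
    rw [hμ'app, keyμ' _ (a : C(K, ℝ)) (restrictExtL_eq K _), hres' a, hΛapp]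
  have hμ'norm : ‖μ'‖ = 1 := by
    refine le_antisymm (LinearMap.mkContinuous_norm_le μ'lin zero_le_one hbound) ?_
    calc (1 : ℝ) = ‖μ' 1‖ := by rw [hμ'1]; simp
      _ ≤ ‖μ'‖ * ‖(1 : C(Set.extremePoints ℝ K, ℝ))‖ := μ'.le_opNorm 1
      _ = ‖μ'‖ := by rw [norm_one, mul_one]
  have hμ'pos : ∀ g : C(Set.extremePoints ℝ K, ℝ), 0 ≤ g → 0 ≤ μ' g := by
    intro g hg
    set c := ‖g‖ with hc
    have hc0 : 0 ≤ c := norm_nonneg g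
    set pclampCM : C(ℝ, ℝ) :=
      ⟨fun t => min (max t 0) c, ((continuous_id.max continuous_const).min
        continuous_const)⟩ with hpclamp
    set f : C(K, ℝ) := pclampCM.comp (exists_restrictExtL_eq K hextcl g).choose with hfdef
    have hRf : R f = g := by
      ext p
      rw [restrictExtL_apply]
      show min (max ((exists_restrictExtL_eq K hextcl g).choose
        ⟨p.1, extremePoints_subset p.2⟩) 0) c = g p
      have h2 : (exists_restrictExtL_eq K hextcl g).choose
          ⟨p.1, extremePoints_subset p.2⟩ = g p := by
        have := DFunLike.congr_fun (hch g) p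
        rwa [restrictExtL_apply] at this
      have hgp0 : (0 : ℝ) ≤ g p := by
        have h3 := ContinuousMap.le_def.1 hg p
        rwa [ContinuousMap.zero_apply] at h3
      have habs := abs_le.1 (by simpa [Real.norm_eq_abs] using g.norm_coe_le_norm p)
      rw [h2, max_eq_left hgp0, min_eq_left habs.2]
    rw [hμ'app, keyμ' g f hRf]
    refine hpos' f (ContinuousMap.le_def.2 fun b => ?_)
    show (0 : ℝ) ≤ min (max _ 0) c
    exact le_min (le_max_right _ _) hc0
  have hμ'μ : μ' = μ := huniq μ' ⟨hμ'Λ, hμ'norm, hμ'pos⟩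
  refine ContinuousLinearMap.ext fun f => ?_
  calc ν' f = μ' (R f) := (keyμ' (R f) f rfl).symm
    _ = μ (R f) := by rw [hμ'μ]
    _ = ν f := rfl
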